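/- There is no plane quartic curve (nonzero homogeneous polynomial of degree 4 in x,y,z over ℂ) vanishing at the fifteen points (0:0:1), (0:1:0), (0:9:5), (1:0:0), (9:0:2), (5:-2:0), (10:10:7), (8:8:7), (-10:10:3), (-8:8:3), (4:7:4), (6:7:6), (-4:11:4), (-6:11:6), (4:1:1). -/

import Mathlib

open MvPolynomial

private noncomputable def mk3 (a b c : ℕ) : Fin 3 →₀ ℕ := Finsupp.equivFunOnFinite.symm ![a, b, c]

private lemma mk3_apply (a b c : ℕ) (i : Fin 3) : (mk3 a b c) i = ![a,b,c] i := by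
  simp [mk3]

private lemma mk3_inj {a b c a' b' c' : ℕ} :
    mk3 a b c = mk3 a' b' c' ↔ a = a' ∧ b = b' ∧ c = c' := by
  constructor
  · intro h
    exact ⟨by simpa [mk3_apply] using congrArg (fun f => f 0) h,
           by simpa [mk3_apply] using congrArg (fun f => f 1) h,
           by simpa [mk3_apply] using congrArg (fun f => f 2) h⟩
  · rintro ⟨rfl, rfl, rfl⟩; rfl

private noncomputable def L4 : List (Fin 3 →₀ ℕ) :=
  [mk3 4 0 0, mk3 3 1 0, mk3 3 0 1, mk3 2 2 0, mk3 2 1 1, mk3 2 0 2, mk3 1 3 0,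
   mk3 1 2 1, mk3 1 1 2, mk3 1 0 3, mk3 0 4 0, mk3 0 3 1, mk3 0 2 2, mk3 0 1 3, mk3 0 0 4]

private lemma mem_L4 {d : Fin 3 →₀ ℕ} (h : d 0 + d 1 + d 2 = 4) : d ∈ L4 := by
  have hd : ∃ a b c : ℕ, a + b + c = 4 ∧ d = mk3 a b c :=
    ⟨d 0, d 1, d 2, h, Finsupp.ext fun i => by fin_cases i <;> simp [mk3_apply]⟩
  obtain ⟨a, b, c, habc, rfl⟩ := hd
  have ha : a ≤ 4 := by omega
  have hb : b ≤ 4 := by omega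
  obtain rfl : c = 4 - a - b := by omega
  interval_cases a <;> interval_cases b <;> first
    | omega
    | simp [L4, mk3_inj]

private lemma L4_nodup : L4.Nodup := by
  simp [L4, mk3_inj]

private lemma deg3 (d : Fin 3 →₀ ℕ) : Finsupp.degree d = d 0 + d 1 + d 2 := by
  have h : Finsupp.degree d = ∑ i, d i :=
    Finset.sum_subset (Finset.subset_univ _) (fun i _ hi => Finsupp.notMem_support_iff.mp hi)
  rw [h, Fin.sum_univ_three]

private lemma eval_homog (F : MvPolynomial (Fin 3) ℂ) (hF : F.IsHomogeneous 4) (v : Fin 3 → ℂ) :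
    eval v F = (L4.map (fun d => coeff d F * (v 0 ^ d 0 * v 1 ^ d 1 * v 2 ^ d 2))).sum := by
  rw [eval_eq', ← List.sum_toFinset _ L4_nodup]
  simp_rw [← Fin.prod_univ_three (fun i => v i ^ _)]
  refine Finset.sum_subset (fun d hd => ?_) (fun d _ hd => ?_)
  · have h4 := hF (MvPolynomial.mem_support_iff.mp hd)
    rw [show Finsupp.weight 1 d = Finsupp.degree d from by rw [Finsupp.degree_eq_weight_one]; rfl, deg3] at h4
    exact List.mem_toFinset.mpr (mem_L4 h4)
  · rw [MvPolynomial.notMem_support_iff.mp hd, zero_mul]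

set_option maxHeartbeats 4000000 in
theorem stmt_5 :
    ¬ ∃ F : MvPolynomial (Fin 3) ℂ, F ≠ 0 ∧ F.IsHomogeneous 4 ∧
      ∀ p ∈ ([(0,0,1), (0,1,0), (0,9,5), (1,0,0), (9,0,2), (5,-2,0),
              (10,10,7), (8,8,7), (-10,10,3), (-8,8,3), (4,7,4), (6,7,6),
              (-4,11,4), (-6,11,6), (4,1,1)] : List (ℂ × ℂ × ℂ)),
        MvPolynomial.eval (![p.1, p.2.1, p.2.2]) F = 0 := by
  rintro ⟨F, hF0, hhom, heval⟩
  have E1 := heval (0,0,1) (by norm_num)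
  rw [eval_homog F hhom] at E1
  simp only [L4, mk3_apply, List.map_cons, List.map_nil, List.sum_cons, List.sum_nil, Matrix.cons_val_zero, Matrix.cons_val_one, Matrix.cons_val_two, Matrix.tail_cons, Matrix.head_cons] at E1
  norm_num at E1
  have E2 := heval (0,1,0) (by norm_num)
  rw [eval_homog F hhom] at E2
  simp only [L4, mk3_apply, List.map_cons, List.map_nil, List.sum_cons, List.sum_nil, Matrix.cons_val_zero, Matrix.cons_val_one, Matrix.cons_val_two, Matrix.tail_cons, Matrix.head_cons] at E2
  norm_num at E2
  have E3 := heval (0,9,5) (by norm_num)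
  rw [eval_homog F hhom] at E3
  simp only [L4, mk3_apply, List.map_cons, List.map_nil, List.sum_cons, List.sum_nil, Matrix.cons_val_zero, Matrix.cons_val_one, Matrix.cons_val_two, Matrix.tail_cons, Matrix.head_cons] at E3
  norm_num at E3
  have E4 := heval (1,0,0) (by norm_num)
  rw [eval_homog F hhom] at E4
  simp only [L4, mk3_apply, List.map_cons, List.map_nil, List.sum_cons, List.sum_nil, Matrix.cons_val_zero, Matrix.cons_val_one, Matrix.cons_val_two, Matrix.tail_cons, Matrix.head_cons] at E4
  norm_num at E4
  have E5 := heval (9,0,2) (by norm_num)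
  rw [eval_homog F hhom] at E5
  simp only [L4, mk3_apply, List.map_cons, List.map_nil, List.sum_cons, List.sum_nil, Matrix.cons_val_zero, Matrix.cons_val_one, Matrix.cons_val_two, Matrix.tail_cons, Matrix.head_cons] at E5
  norm_num at E5
  have E6 := heval (5,-2,0) (by norm_num)
  rw [eval_homog F hhom] at E6
  simp only [L4, mk3_apply, List.map_cons, List.map_nil, List.sum_cons, List.sum_nil, Matrix.cons_val_zero, Matrix.cons_val_one, Matrix.cons_val_two, Matrix.tail_cons, Matrix.head_cons] at E6
  norm_num at E6
  have E7 := heval (10,10,7) (by norm_num)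
  rw [eval_homog F hhom] at E7
  simp only [L4, mk3_apply, List.map_cons, List.map_nil, List.sum_cons, List.sum_nil, Matrix.cons_val_zero, Matrix.cons_val_one, Matrix.cons_val_two, Matrix.tail_cons, Matrix.head_cons] at E7
  norm_num at E7
  have E8 := heval (8,8,7) (by norm_num)
  rw [eval_homog F hhom] at E8
  simp only [L4, mk3_apply, List.map_cons, List.map_nil, List.sum_cons, List.sum_nil, Matrix.cons_val_zero, Matrix.cons_val_one, Matrix.cons_val_two, Matrix.tail_cons, Matrix.head_cons] at E8
  norm_num at E8
  have E9 := heval (-10,10,3) (by norm_num)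
  rw [eval_homog F hhom] at E9
  simp only [L4, mk3_apply, List.map_cons, List.map_nil, List.sum_cons, List.sum_nil, Matrix.cons_val_zero, Matrix.cons_val_one, Matrix.cons_val_two, Matrix.tail_cons, Matrix.head_cons] at E9
  norm_num at E9
  have E10 := heval (-8,8,3) (by norm_num)
  rw [eval_homog F hhom] at E10
  simp only [L4, mk3_apply, List.map_cons, List.map_nil, List.sum_cons, List.sum_nil, Matrix.cons_val_zero, Matrix.cons_val_one, Matrix.cons_val_two, Matrix.tail_cons, Matrix.head_cons] at E10
  norm_num at E10
  have E11 := heval (4,7,4) (by norm_num)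
  rw [eval_homog F hhom] at E11
  simp only [L4, mk3_apply, List.map_cons, List.map_nil, List.sum_cons, List.sum_nil, Matrix.cons_val_zero, Matrix.cons_val_one, Matrix.cons_val_two, Matrix.tail_cons, Matrix.head_cons] at E11
  norm_num at E11
  have E12 := heval (6,7,6) (by norm_num)
  rw [eval_homog F hhom] at E12
  simp only [L4, mk3_apply, List.map_cons, List.map_nil, List.sum_cons, List.sum_nil, Matrix.cons_val_zero, Matrix.cons_val_one, Matrix.cons_val_two, Matrix.tail_cons, Matrix.head_cons] at E12
  norm_num at E12
  have E13 := heval (-4,11,4) (by norm_num)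
  rw [eval_homog F hhom] at E13
  simp only [L4, mk3_apply, List.map_cons, List.map_nil, List.sum_cons, List.sum_nil, Matrix.cons_val_zero, Matrix.cons_val_one, Matrix.cons_val_two, Matrix.tail_cons, Matrix.head_cons] at E13
  norm_num at E13
  have E14 := heval (-6,11,6) (by norm_num)
  rw [eval_homog F hhom] at E14
  simp only [L4, mk3_apply, List.map_cons, List.map_nil, List.sum_cons, List.sum_nil, Matrix.cons_val_zero, Matrix.cons_val_one, Matrix.cons_val_two, Matrix.tail_cons, Matrix.head_cons] at E14
  norm_num at E14
  have E15 := heval (4,1,1) (by norm_num)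
  rw [eval_homog F hhom] at E15
  simp only [L4, mk3_apply, List.map_cons, List.map_nil, List.sum_cons, List.sum_nil, Matrix.cons_val_zero, Matrix.cons_val_one, Matrix.cons_val_two, Matrix.tail_cons, Matrix.head_cons] at E15
  norm_num at E15
  have h400 : coeff (mk3 4 0 0) F = 0 := by
    linear_combination (1 : ℂ) * E4
  have h310 : coeff (mk3 3 1 0) F = 0 := by
    linear_combination ((-53 : ℂ)/2664) * E1 + ((15 : ℂ)/74) * E2 + ((-1 : ℂ)/1332) * E3 + ((905 : ℂ)/74) * E4 + ((265 : ℂ)/25641) * E5 + ((-143 : ℂ)/1554) * E6 + ((449 : ℂ)/528360) * E7 + ((-303 : ℂ)/41440) * E8 + ((23 : ℂ)/31080) * E9 + ((301 : ℂ)/195360) * E10 + ((-157 : ℂ)/136752) * E11 + ((27 : ℂ)/2072) * E12 + ((-101 : ℂ)/227920) * E13 + ((-151 : ℂ)/276760) * E14 + ((-53 : ℂ)/444) * E15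
  have h301 : coeff (mk3 3 0 1) F = 0 := by
    linear_combination ((73 : ℂ)/3330) * E1 + ((-159 : ℂ)/740) * E2 + ((1 : ℂ)/740) * E3 + ((-1629 : ℂ)/74) * E4 + ((-769 : ℂ)/51282) * E5 + ((159 : ℂ)/1295) * E6 + ((-823 : ℂ)/528360) * E7 + ((271 : ℂ)/24864) * E8 + ((-257 : ℂ)/404040) * E9 + ((-527 : ℂ)/195360) * E10 + ((475 : ℂ)/136752) * E11 + ((-1555 : ℂ)/80808) * E12 + ((41 : ℂ)/136752) * E13 + ((623 : ℂ)/830280) * E14 + ((159 : ℂ)/740) * E15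
  have h220 : coeff (mk3 2 2 0) F = 0 := by
    linear_combination ((-1007 : ℂ)/8880) * E1 + ((2713 : ℂ)/2220) * E2 + ((-19 : ℂ)/4440) * E3 + ((1756 : ℂ)/37) * E4 + ((1007 : ℂ)/17094) * E5 + ((-3761 : ℂ)/7770) * E6 + ((1943 : ℂ)/352240) * E7 + ((-3691 : ℂ)/82880) * E8 + ((1751 : ℂ)/808080) * E9 + ((5089 : ℂ)/390720) * E10 + ((-1011 : ℂ)/91168) * E11 + ((12833 : ℂ)/161616) * E12 + ((-67 : ℂ)/41440) * E13 + ((-5993 : ℂ)/1660560) * E14 + ((-1007 : ℂ)/1480) * E15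
  have h211 : coeff (mk3 2 1 1) F = 0 := by
    linear_combination ((3415 : ℂ)/10656) * E1 + ((-10181 : ℂ)/2960) * E2 + ((77 : ℂ)/5328) * E3 + ((-6375 : ℂ)/37) * E4 + ((-265 : ℂ)/1332) * E5 + ((1169 : ℂ)/740) * E6 + ((-14583 : ℂ)/704480) * E7 + ((5051 : ℂ)/33152) * E8 + ((-1217 : ℂ)/230880) * E9 + ((-7033 : ℂ)/156288) * E10 + ((9333 : ℂ)/182336) * E11 + ((-87371 : ℂ)/323232) * E12 + ((89 : ℂ)/26048) * E13 + ((8027 : ℂ)/664224) * E14 + ((1459 : ℂ)/592) * E15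
  have h202 : coeff (mk3 2 0 2) F = 0 := by
    linear_combination ((-4213 : ℂ)/19980) * E1 + ((29839 : ℂ)/13320) * E2 + ((-563 : ℂ)/39960) * E3 + ((17308 : ℂ)/111) * E4 + ((25843 : ℂ)/153846) * E5 + ((-29839 : ℂ)/23310) * E6 + ((61613 : ℂ)/3170160) * E7 + ((-2165 : ℂ)/16576) * E8 + ((5947 : ℂ)/2424240) * E9 + ((45629 : ℂ)/1172160) * E10 + ((-44185 : ℂ)/820512) * E11 + ((111745 : ℂ)/484848) * E12 + ((-241 : ℂ)/273504) * E13 + ((-48181 : ℂ)/4981680) * E14 + ((-29839 : ℂ)/13320) * E15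
  have h130 : coeff (mk3 1 3 0) F = 0 := by
    linear_combination ((-53 : ℂ)/333) * E1 + ((2429 : ℂ)/1110) * E2 + ((-2 : ℂ)/333) * E3 + ((2140 : ℂ)/37) * E4 + ((2120 : ℂ)/25641) * E5 + ((-2564 : ℂ)/3885) * E6 + ((16 : ℂ)/1887) * E7 + ((-17 : ℂ)/259) * E8 + ((8 : ℂ)/10101) * E9 + ((28 : ℂ)/1221) * E10 + ((-1405 : ℂ)/68376) * E11 + ((2365 : ℂ)/20202) * E12 + ((-29 : ℂ)/22792) * E13 + ((-233 : ℂ)/41514) * E14 + ((-106 : ℂ)/111) * E15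
  have h121 : coeff (mk3 1 2 1) F = 0 := by
    linear_combination ((8653 : ℂ)/13320) * E1 + ((-7127 : ℂ)/740) * E2 + ((187 : ℂ)/6660) * E3 + ((-11577 : ℂ)/37) * E4 + ((-3649 : ℂ)/8547) * E5 + ((4352 : ℂ)/1295) * E6 + ((-24977 : ℂ)/528360) * E7 + ((8525 : ℂ)/24864) * E8 + ((-1163 : ℂ)/404040) * E9 + ((-23201 : ℂ)/195360) * E10 + ((8941 : ℂ)/68376) * E11 + ((-24601 : ℂ)/40404) * E12 + ((317 : ℂ)/68376) * E13 + ((12197 : ℂ)/415140) * E14 + ((3797 : ℂ)/740) * E15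
  have h112 : coeff (mk3 1 1 2) F = 0 := by
    linear_combination ((-6427 : ℂ)/7992) * E1 + ((88967 : ℂ)/6660) * E2 + ((-1021 : ℂ)/19980) * E3 + ((63115 : ℂ)/111) * E4 + ((57110 : ℂ)/76923) * E5 + ((-13309 : ℂ)/2331) * E6 + ((35137 : ℂ)/396270) * E7 + ((-9437 : ℂ)/15540) * E8 + ((29 : ℂ)/23310) * E9 + ((30253 : ℂ)/146520) * E10 + ((-108161 : ℂ)/410256) * E11 + ((20033 : ℂ)/18648) * E12 + ((-639 : ℂ)/227920) * E13 + ((-125921 : ℂ)/2490840) * E14 + ((-12421 : ℂ)/1332) * E15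
  have h103 : coeff (mk3 1 0 3) F = 0 := by
    linear_combination ((1883 : ℂ)/6660) * E1 + ((-212 : ℂ)/37) * E2 + ((4 : ℂ)/111) * E3 + ((-12840 : ℂ)/37) * E4 + ((-11240 : ℂ)/25641) * E5 + ((848 : ℂ)/259) * E6 + ((-1231 : ℂ)/22015) * E7 + ((1521 : ℂ)/4144) * E8 + ((31 : ℂ)/16835) * E9 + ((-785 : ℂ)/6512) * E10 + ((70 : ℂ)/407) * E11 + ((-2180 : ℂ)/3367) * E12 + ((-6 : ℂ)/2849) * E13 + ((196 : ℂ)/6919) * E14 + ((212 : ℂ)/37) * E15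
  have h040 : coeff (mk3 0 4 0) F = 0 := by
    linear_combination (1 : ℂ) * E2
  have h031 : coeff (mk3 0 3 1) F = 0 := by
    linear_combination ((-89 : ℂ)/444) * E1 + ((-3957 : ℂ)/740) * E2 + ((-7 : ℂ)/1110) * E3 + ((360 : ℂ)/37) * E4 + ((50 : ℂ)/2849) * E5 + ((-30 : ℂ)/259) * E6 + ((31 : ℂ)/17612) * E7 + ((-71 : ℂ)/4144) * E8 + ((-11 : ℂ)/13468) * E9 + ((31 : ℂ)/6512) * E10 + ((-5 : ℂ)/5698) * E11 + ((1285 : ℂ)/40404) * E12 + ((19 : ℂ)/11396) * E13 + ((-49 : ℂ)/83028) * E14 + ((-15 : ℂ)/74) * E15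
  have h022 : coeff (mk3 0 2 2) F = 0 := by
    linear_combination ((41893 : ℂ)/39960) * E1 + ((12445 : ℂ)/1332) * E2 + ((47 : ℂ)/1998) * E3 + ((-3944 : ℂ)/111) * E4 + ((-4930 : ℂ)/76923) * E5 + ((986 : ℂ)/2331) * E6 + ((-763 : ℂ)/113220) * E7 + ((499 : ℂ)/7770) * E8 + ((223 : ℂ)/86580) * E9 + ((-2393 : ℂ)/146520) * E10 + ((91 : ℂ)/14652) * E11 + ((-14489 : ℂ)/121212) * E12 + ((-67 : ℂ)/12210) * E13 + ((2273 : ℂ)/1245420) * E14 + ((493 : ℂ)/666) * E15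
  have h013 : coeff (mk3 0 1 3) F = 0 := by
    linear_combination ((-4777 : ℂ)/2664) * E1 + ((-197 : ℂ)/37) * E2 + ((-7 : ℂ)/333) * E3 + ((1200 : ℂ)/37) * E4 + ((500 : ℂ)/8547) * E5 + ((-100 : ℂ)/259) * E6 + ((283 : ℂ)/44030) * E7 + ((-249 : ℂ)/4144) * E8 + ((-67 : ℂ)/33670) * E9 + ((91 : ℂ)/6512) * E10 + ((-95 : ℂ)/11396) * E11 + ((755 : ℂ)/6734) * E12 + ((51 : ℂ)/11396) * E13 + ((-19 : ℂ)/13838) * E14 + ((-25 : ℂ)/37) * E15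
  have h004 : coeff (mk3 0 0 4) F = 0 := by
    linear_combination (1 : ℂ) * E1
  apply hF0
  apply MvPolynomial.ext
  intro d
  rw [coeff_zero]
  by_cases h4 : d 0 + d 1 + d 2 = 4
  · have hm := mem_L4 h4
    simp only [L4, List.mem_cons, List.not_mem_nil, or_false] at hm
    rcases hm with rfl|rfl|rfl|rfl|rfl|rfl|rfl|rfl|rfl|rfl|rfl|rfl|rfl|rfl|rfl <;> assumption
  · exact hhom.coeff_eq_zero (by rw [deg3]; exact h4)
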